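/- Let A be an m×n complex matrix of rank r with singular value decomposition A = U₁Σ₁V₁*, and B an m×n complex matrix of rank s with singular value decomposition B = Ũ₁Σ̃₁Ṽ₁*, and let E = B − A. Then ‖B†EA†‖_F² = ‖Ṽ₁*V₁Σ₁⁻¹ − Σ̃₁⁻¹Ũ₁*U₁‖_F² and ‖A†EB†‖_F² = ‖Σ₁⁻¹U₁*Ũ₁ − V₁*Ṽ₁Σ̃₁⁻¹‖_F². -/

import Mathlib

open Matrix

/-- The square of the Frobenius norm of a complex matrix. -/
noncomputable def frobSq {α β : Type*} [Fintype α] [Fintype β] (M : Matrix α β ℂ) : ℝ :=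
  ∑ i, ∑ j, ‖M i j‖ ^ 2

/-- The spectral norm (ℓ²-operator norm) of a complex matrix. -/
noncomputable def spec {α β : Type*} [Fintype α] [Fintype β] [DecidableEq β]
    (M : Matrix α β ℂ) : ℝ :=
  ‖LinearMap.toContinuousLinearMap (Matrix.toEuclideanLin M)‖

/-- `X` is the Moore–Penrose inverse of `M` (the four Penrose equations). -/
def IsMoorePenrose {α β : Type*} [Fintype α] [Fintype β]
    (M : Matrix α β ℂ) (X : Matrix β α ℂ) : Prop :=
  M * X * M = M ∧ X * M * X = X ∧ (M * X)ᴴ = M * X ∧ (X * M)ᴴ = X * M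

lemma frobSq_eq_trace {α β : Type*} [Fintype α] [Fintype β] (M : Matrix α β ℂ) :
    frobSq M = (Matrix.trace (Mᴴ * M)).re := by
  simp only [Matrix.trace, Matrix.diag, Matrix.mul_apply, Matrix.conjTranspose_apply, frobSq]
  rw [Finset.sum_comm]
  simp only [Complex.re_sum]
  congr 1; ext i; congr 1; ext j
  rw [show (star (M j i)) = (starRingEnd ℂ) (M j i) from rfl, RCLike.conj_mul]
  norm_cast

lemma frobSq_conj {α β γ δ : Type*} [Fintype α] [Fintype β] [Fintype γ] [Fintype δ]
    [DecidableEq β] [DecidableEq γ]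
    (P : Matrix α β ℂ) (M : Matrix β γ ℂ) (Q : Matrix δ γ ℂ)
    (hP : Pᴴ * P = 1) (hQ : Qᴴ * Q = 1) :
    frobSq (P * M * Qᴴ) = frobSq M := by
  rw [frobSq_eq_trace, frobSq_eq_trace]
  congr 1
  have hp : Pᴴ * (P * (M * Qᴴ)) = M * Qᴴ := by rw [← Matrix.mul_assoc, hP, Matrix.one_mul]
  have h1 : (P * M * Qᴴ)ᴴ * (P * M * Qᴴ) = Q * ((Mᴴ * M) * Qᴴ) := by
    simp only [Matrix.conjTranspose_mul, Matrix.conjTranspose_conjTranspose, Matrix.mul_assoc, hp]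
  rw [h1, Matrix.trace_mul_comm, Matrix.mul_assoc, hQ, Matrix.mul_one]

lemma cols_orth {a b c : ℕ} (W₁ : Matrix (Fin a) (Fin b) ℂ) (W₂ : Matrix (Fin a) (Fin c) ℂ)
    (h : (fromCols W₁ W₂)ᴴ * fromCols W₁ W₂ = 1) : W₁ᴴ * W₁ = 1 := by
  rw [conjTranspose_fromCols_eq_fromRows_conjTranspose, fromRows_mul_fromCols,
    ← fromBlocks_one] at h
  have := congrArg Matrix.toBlocks₁₁ h
  simpa only [Matrix.toBlocks_fromBlocks₁₁] using this

theorem stmt19 {m n r s : ℕ}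
    (A B : Matrix (Fin m) (Fin n) ℂ)
    (hrankA : A.rank = r) (hrankB : B.rank = s)
    (σ : Fin r → ℝ) (hσmono : Antitone σ) (hσpos : ∀ i, 0 < σ i)
    (τ : Fin s → ℝ) (hτmono : Antitone τ) (hτpos : ∀ i, 0 < τ i)
    (U₁ : Matrix (Fin m) (Fin r) ℂ) (U₂ : Matrix (Fin m) (Fin (m - r)) ℂ)
    (V₁ : Matrix (Fin n) (Fin r) ℂ) (V₂ : Matrix (Fin n) (Fin (n - r)) ℂ)
    (tU₁ : Matrix (Fin m) (Fin s) ℂ) (tU₂ : Matrix (Fin m) (Fin (m - s)) ℂ)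
    (tV₁ : Matrix (Fin n) (Fin s) ℂ) (tV₂ : Matrix (Fin n) (Fin (n - s)) ℂ)
    (hU : (fromCols U₁ U₂)ᴴ * fromCols U₁ U₂ = 1
        ∧ fromCols U₁ U₂ * (fromCols U₁ U₂)ᴴ = 1)
    (hV : (fromCols V₁ V₂)ᴴ * fromCols V₁ V₂ = 1
        ∧ fromCols V₁ V₂ * (fromCols V₁ V₂)ᴴ = 1)
    (htU : (fromCols tU₁ tU₂)ᴴ * fromCols tU₁ tU₂ = 1
        ∧ fromCols tU₁ tU₂ * (fromCols tU₁ tU₂)ᴴ = 1)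
    (htV : (fromCols tV₁ tV₂)ᴴ * fromCols tV₁ tV₂ = 1
        ∧ fromCols tV₁ tV₂ * (fromCols tV₁ tV₂)ᴴ = 1)
    (hAsvd : A = U₁ * diagonal (fun i => (σ i : ℂ)) * V₁ᴴ)
    (hBsvd : B = tU₁ * diagonal (fun i => (τ i : ℂ)) * tV₁ᴴ)
    (E : Matrix (Fin m) (Fin n) ℂ) (hE : E = B - A)
    (Adag Bdag : Matrix (Fin n) (Fin m) ℂ)
    (hAdag : Adag = V₁ * diagonal (fun i => ((σ i : ℂ))⁻¹) * U₁ᴴ)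
    (hBdag : Bdag = tV₁ * diagonal (fun i => ((τ i : ℂ))⁻¹) * tU₁ᴴ) :
    frobSq (Bdag * E * Adag)
        = frobSq (tV₁ᴴ * V₁ * diagonal (fun i => ((σ i : ℂ))⁻¹)
            - diagonal (fun i => ((τ i : ℂ))⁻¹) * tU₁ᴴ * U₁)
    ∧ frobSq (Adag * E * Bdag)
        = frobSq (diagonal (fun i => ((σ i : ℂ))⁻¹) * U₁ᴴ * tU₁
            - V₁ᴴ * tV₁ * diagonal (fun i => ((τ i : ℂ))⁻¹)) := by
  have hU11 : U₁ᴴ * U₁ = 1 := cols_orth _ _ hU.1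
  have hV11 : V₁ᴴ * V₁ = 1 := cols_orth _ _ hV.1
  have htU11 : tU₁ᴴ * tU₁ = 1 := cols_orth _ _ htU.1
  have htV11 : tV₁ᴴ * tV₁ = 1 := cols_orth _ _ htV.1
  set Ds : Matrix (Fin r) (Fin r) ℂ := diagonal (fun i => (σ i : ℂ)) with hDs
  set Dsi : Matrix (Fin r) (Fin r) ℂ := diagonal (fun i => ((σ i : ℂ))⁻¹) with hDsi
  set Dt : Matrix (Fin s) (Fin s) ℂ := diagonal (fun i => (τ i : ℂ)) with hDt
  set Dti : Matrix (Fin s) (Fin s) ℂ := diagonal (fun i => ((τ i : ℂ))⁻¹) with hDti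
  have hσne : ∀ i, (σ i : ℂ) ≠ 0 := fun i => by
    exact_mod_cast Complex.ofReal_ne_zero.mpr (hσpos i).ne'
  have hτne : ∀ i, (τ i : ℂ) ≠ 0 := fun i => by
    exact_mod_cast Complex.ofReal_ne_zero.mpr (hτpos i).ne'
  have hDss : Ds * Dsi = 1 := by
    have h : (fun i => (σ i : ℂ) * ((σ i : ℂ))⁻¹) = fun _ => (1:ℂ) :=
      funext fun i => mul_inv_cancel₀ (hσne i)
    rw [hDs, hDsi, diagonal_mul_diagonal, h, diagonal_one]
  have hDss' : Dsi * Ds = 1 := by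
    have h : (fun i => ((σ i : ℂ))⁻¹ * (σ i : ℂ)) = fun _ => (1:ℂ) :=
      funext fun i => inv_mul_cancel₀ (hσne i)
    rw [hDs, hDsi, diagonal_mul_diagonal, h, diagonal_one]
  have hDtt : Dt * Dti = 1 := by
    have h : (fun i => (τ i : ℂ) * ((τ i : ℂ))⁻¹) = fun _ => (1:ℂ) :=
      funext fun i => mul_inv_cancel₀ (hτne i)
    rw [hDt, hDti, diagonal_mul_diagonal, h, diagonal_one]
  have hDtt' : Dti * Dt = 1 := by
    have h : (fun i => ((τ i : ℂ))⁻¹ * (τ i : ℂ)) = fun _ => (1:ℂ) :=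
      funext fun i => inv_mul_cancel₀ (hτne i)
    rw [hDt, hDti, diagonal_mul_diagonal, h, diagonal_one]
  -- associated cancellation lemmas
  have lU : ∀ {k : Type} (X : Matrix (Fin r) k ℂ), U₁ᴴ * (U₁ * X) = X := fun X => by
    rw [← Matrix.mul_assoc, hU11, Matrix.one_mul]
  have lV : ∀ {k : Type} (X : Matrix (Fin r) k ℂ), V₁ᴴ * (V₁ * X) = X := fun X => by
    rw [← Matrix.mul_assoc, hV11, Matrix.one_mul]
  have ltU : ∀ {k : Type} (X : Matrix (Fin s) k ℂ), tU₁ᴴ * (tU₁ * X) = X := fun X => by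
    rw [← Matrix.mul_assoc, htU11, Matrix.one_mul]
  have ltV : ∀ {k : Type} (X : Matrix (Fin s) k ℂ), tV₁ᴴ * (tV₁ * X) = X := fun X => by
    rw [← Matrix.mul_assoc, htV11, Matrix.one_mul]
  have lDs : ∀ {k : Type} (X : Matrix (Fin r) k ℂ), Ds * (Dsi * X) = X := fun X => by
    rw [← Matrix.mul_assoc, hDss, Matrix.one_mul]
  have lDs' : ∀ {k : Type} (X : Matrix (Fin r) k ℂ), Dsi * (Ds * X) = X := fun X => by
    rw [← Matrix.mul_assoc, hDss', Matrix.one_mul]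
  have lDt : ∀ {k : Type} (X : Matrix (Fin s) k ℂ), Dt * (Dti * X) = X := fun X => by
    rw [← Matrix.mul_assoc, hDtt, Matrix.one_mul]
  have lDt' : ∀ {k : Type} (X : Matrix (Fin s) k ℂ), Dti * (Dt * X) = X := fun X => by
    rw [← Matrix.mul_assoc, hDtt', Matrix.one_mul]
  have key1 : Bdag * E * Adag = tV₁ * (tV₁ᴴ * V₁ * Dsi - Dti * tU₁ᴴ * U₁) * U₁ᴴ := by
    subst hE hAdag hBdag hAsvd hBsvd
    simp only [Matrix.mul_sub, Matrix.sub_mul, Matrix.mul_assoc, lU, lV, ltU, ltV, lDs, lDs',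
      lDt, lDt']
  have key2 : Adag * E * Bdag = V₁ * (Dsi * U₁ᴴ * tU₁ - V₁ᴴ * tV₁ * Dti) * tU₁ᴴ := by
    subst hE hAdag hBdag hAsvd hBsvd
    simp only [Matrix.mul_sub, Matrix.sub_mul, Matrix.mul_assoc, lU, lV, ltU, ltV, lDs, lDs',
      lDt, lDt']
  constructor
  · rw [key1, frobSq_conj _ _ _ htV11 hU11]
  · rw [key2, frobSq_conj _ _ _ hV11 htU11]
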